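/- arXiv:1801.10465 — 5 statements merged into one kernel-verified Lean document; each statement's English description precedes it below -/
import Mathlib

section
/- On the 3×2 grid graph, every multi-robot path planning instance is solvable: for every bijection π of the six vertices there is a sequence of valid moves taking the identity configuration to π. Moreover, there is an absolute constant C such that every such instance has a solution of makespan at most C. -/
/-- The `m₁ × m₂` grid graph: vertices are pairs, adjacent iff they differ
by exactly 1 in exactly one coordinate. -/
def Grid2 (m₁ m₂ : ℕ) : SimpleGraph (Fin m₁ × Fin m₂) where
  Adj a b := (((a.1 : ℤ) - (b.1 : ℤ)).natAbs = 1 ∧ a.2 = b.2) ∨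
             (a.1 = b.1 ∧ ((a.2 : ℤ) - (b.2 : ℤ)).natAbs = 1)
  symm := by
    constructor
    rintro a b (⟨h1, h2⟩ | ⟨h1, h2⟩)
    · exact Or.inl ⟨by omega, h2.symm⟩
    · exact Or.inr ⟨h1.symm, by omega⟩
  loopless := by
    constructor
    rintro a (⟨h1, _⟩ | ⟨_, h1⟩) <;> simp at h1

/-- A valid synchronous move between two configurations: each robot stays or
moves to an adjacent vertex, and no two robots swap along an edge. -/
def ValidMove {V : Type*} (G : SimpleGraph V) (X X' : Equiv.Perm V) : Prop :=
  (∀ i, X' i = X i ∨ G.Adj (X i) (X' i)) ∧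
  (∀ i j, i ≠ j → X i = X' j → X j ≠ X' i)

/-- `SolvableIn G XI XG t` : there is a solution of makespan `t` for the MPP
instance `(G, XI, XG)`. -/
def SolvableIn {V : Type*} (G : SimpleGraph V) (XI XG : Equiv.Perm V) (t : ℕ) : Prop :=
  ∃ Xs : ℕ → Equiv.Perm V, Xs 0 = XI ∧ Xs t = XG ∧
    ∀ s < t, ValidMove G (Xs s) (Xs (s + 1))

/-! ### Auxiliary development -/

instance : DecidableRel (Grid2 3 2).Adj := fun a b =>
  decidable_of_iff ((((a.1 : ℤ) - (b.1 : ℤ)).natAbs = 1 ∧ a.2 = b.2) ∨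
             (a.1 = b.1 ∧ ((a.2 : ℤ) - (b.2 : ℤ)).natAbs = 1)) Iff.rfl

/-- Rotation of all six robots around the boundary cycle of the `3 × 2` grid. -/
def pC : Equiv.Perm (Fin 3 × Fin 2) :=
  ([(0,0),(1,0),(2,0),(2,1),(1,1),(0,1)] : List (Fin 3 × Fin 2)).formPerm

/-- Rotation of the left `2 × 2` square. -/
def pA : Equiv.Perm (Fin 3 × Fin 2) :=
  ([(0,0),(1,0),(1,1),(0,1)] : List (Fin 3 × Fin 2)).formPerm

/-- Rotation of the right `2 × 2` square. -/
def pB : Equiv.Perm (Fin 3 × Fin 2) :=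
  ([(1,0),(2,0),(2,1),(1,1)] : List (Fin 3 × Fin 2)).formPerm

/-- A permutation of the vertices which moves every vertex to an adjacent
vertex (or fixes it) and contains no 2-cycles.  Applying such a permutation
simultaneously to all robots is a valid move. -/
def GoodMove (r : Equiv.Perm (Fin 3 × Fin 2)) : Prop :=
  (∀ p, r p = p ∨ (Grid2 3 2).Adj p (r p)) ∧ (∀ p, r p ≠ p → r (r p) ≠ p)

lemma validMove_good {r : Equiv.Perm (Fin 3 × Fin 2)} (hr : GoodMove r)
    (X : Equiv.Perm (Fin 3 × Fin 2)) : ValidMove (Grid2 3 2) X (r * X) := by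
  constructor
  · intro i
    rcases hr.1 (X i) with h | h
    · exact Or.inl (by simpa using h)
    · exact Or.inr (by simpa using h)
  · intro i j hij e1 e2
    simp only [Equiv.Perm.mul_apply] at e1 e2
    by_cases hfix : r (X i) = X i
    · rw [hfix] at e2
      exact hij (X.injective e2.symm)
    · exact hr.2 (X i) hfix (by rw [← e2, ← e1])

lemma solvable_zero (X : Equiv.Perm (Fin 3 × Fin 2)) : SolvableIn (Grid2 3 2) X X 0 :=
  ⟨fun _ => X, rfl, rfl, by omega⟩

lemma solvable_step {XI XG : Equiv.Perm (Fin 3 × Fin 2)} {t : ℕ}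
    {r : Equiv.Perm (Fin 3 × Fin 2)} (h : SolvableIn (Grid2 3 2) XI XG t)
    (hr : GoodMove r) : SolvableIn (Grid2 3 2) XI (r * XG) (t + 1) := by
  obtain ⟨Xs, h0, ht, hm⟩ := h
  refine ⟨fun s => if s ≤ t then Xs s else r * XG, by simp [h0], by simp, ?_⟩
  intro s hs
  rcases Nat.lt_or_ge s t with h | h
  · have h1 : s ≤ t := le_of_lt h
    have h2 : s + 1 ≤ t := h
    simp only [if_pos h1, if_pos h2]
    exact hm s h
  · have hst : s = t := by omega
    subst hst
    simp only [if_pos le_rfl, if_neg (by omega : ¬ s + 1 ≤ s), ht]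
    exact validMove_good hr XG

lemma solvable_shift {τ σ : Equiv.Perm (Fin 3 × Fin 2)} {t : ℕ}
    (h : SolvableIn (Grid2 3 2) 1 τ t) : SolvableIn (Grid2 3 2) σ (τ * σ) t := by
  obtain ⟨Xs, h0, ht, hm⟩ := h
  refine ⟨fun s => Xs s * σ, by simp [h0], by simp [ht], ?_⟩
  intro s hs
  obtain ⟨h1, h2⟩ := hm s hs
  constructor
  · intro i
    simpa using h1 (σ i)
  · intro i j hij e
    have hne : σ i ≠ σ j := fun hc => hij (σ.injective hc)
    have := h2 (σ i) (σ j) hne (by simpa using e)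
    simpa using this

lemma solvable_trans {X Y Z : Equiv.Perm (Fin 3 × Fin 2)} {s t : ℕ}
    (h1 : SolvableIn (Grid2 3 2) X Y s) (h2 : SolvableIn (Grid2 3 2) Y Z t) :
    SolvableIn (Grid2 3 2) X Z (s + t) := by
  obtain ⟨Xs, a0, a1, am⟩ := h1
  obtain ⟨Ys, b0, b1, bm⟩ := h2
  refine ⟨fun u => if u < s then Xs u else Ys (u - s), ?_, ?_, ?_⟩
  · by_cases hs : 0 < s
    · simp [hs, a0]
    · have hz : s = 0 := by omega
      subst hz
      simpa [b0] using (a1.symm.trans a0)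
  · beta_reduce
    rw [if_neg (by omega : ¬ s + t < s), (by omega : s + t - s = t), b1]
  · intro u hu
    by_cases hlt : u + 1 < s
    · have h' : u < s := by omega
      beta_reduce
      rw [if_pos h', if_pos hlt]
      exact am u (by omega)
    · by_cases hlt2 : u < s
      · have heq : u + 1 = s := by omega
        beta_reduce
        rw [if_pos hlt2, if_neg hlt, (by omega : u + 1 - s = 0), b0, ← a1, ← heq]
        exact am u (by omega)
      · beta_reduce
        rw [if_neg hlt2, if_neg hlt, (by omega : u + 1 - s = (u - s) + 1)]
        exact bm (u - s) (by omega)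

/-- The set of configurations reachable from the identity. -/
def Reach (π : Equiv.Perm (Fin 3 × Fin 2)) : Prop :=
  ∃ t, SolvableIn (Grid2 3 2) 1 π t

lemma reach_one : Reach 1 := ⟨0, solvable_zero 1⟩

lemma reach_mul {σ τ : Equiv.Perm (Fin 3 × Fin 2)} (hσ : Reach σ) (hτ : Reach τ) :
    Reach (σ * τ) := by
  obtain ⟨s, hs⟩ := hτ
  obtain ⟨t, ht⟩ := hσ
  exact ⟨s + t, solvable_trans hs (solvable_shift ht)⟩

lemma reach_pow {σ : Equiv.Perm (Fin 3 × Fin 2)} (h : Reach σ) :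
    ∀ n, Reach (σ ^ n) := by
  intro n
  induction n with
  | zero => simpa using reach_one
  | succ k ih => rw [pow_succ]; exact reach_mul ih h

lemma reach_inv {σ : Equiv.Perm (Fin 3 × Fin 2)} (h : Reach σ) : Reach σ⁻¹ := by
  have hpow := reach_pow h (orderOf σ - 1)
  have ho : 0 < orderOf σ := orderOf_pos σ
  have hmul : σ * σ ^ (orderOf σ - 1) = 1 := by
    rw [← pow_succ', Nat.sub_add_cancel ho]
    exact pow_orderOf_eq_one σ
  rw [inv_eq_of_mul_eq_one_right hmul]
  exact hpow

lemma reach_good {r : Equiv.Perm (Fin 3 × Fin 2)} (hr : GoodMove r) : Reach r :=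
  ⟨1, by simpa using solvable_step (solvable_zero 1) hr⟩

lemma good_pC : GoodMove pC := by unfold GoodMove; decide
lemma good_pA : GoodMove pA := by unfold GoodMove; decide
lemma good_pB : GoodMove pB := by unfold GoodMove; decide

lemma reach_all (π : Equiv.Perm (Fin 3 × Fin 2)) : Reach π := by
  have hc : pC.IsCycle := List.isCycle_formPerm (by decide) (by decide)
  have hs : pC.support = Finset.univ := by
    rw [pC, List.support_formPerm_of_nodup _ (by decide) (by decide)]
    decide
  have htop := Equiv.Perm.closure_cycle_adjacent_swap hc hs ((0, 0) : Fin 3 × Fin 2)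
  have hπ : π ∈ Subgroup.closure
      ({pC, Equiv.swap ((0, 0) : Fin 3 × Fin 2) (pC (0, 0))} :
        Set (Equiv.Perm (Fin 3 × Fin 2))) := htop ▸ Subgroup.mem_top π
  have hgen : ∀ x ∈ ({pC, Equiv.swap ((0, 0) : Fin 3 × Fin 2) (pC (0, 0))} :
      Set (Equiv.Perm (Fin 3 × Fin 2))), Reach x := by
    rintro x (rfl | rfl)
    · exact reach_good good_pC
    · have hswap : Equiv.swap ((0, 0) : Fin 3 × Fin 2) (pC (0, 0)) = pC⁻¹ * pB * pA := by
        decide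
      rw [hswap]
      exact reach_mul (reach_mul (reach_inv (reach_good good_pC)) (reach_good good_pB))
        (reach_good good_pA)
  exact Subgroup.closure_induction (p := fun x _ => Reach x)
    (fun x hx => hgen x hx) reach_one
    (fun x y _ _ hx hy => reach_mul hx hy)
    (fun x _ hx => reach_inv hx) hπ

/-- On the 3×2 grid every MPP instance (from the identity configuration to an
arbitrary bijection π) is solvable; moreover there is an absolute constant `C`
bounding the needed makespan. -/
theorem grid_3x2_all_instances_solvable_in_constant_makespan :
    (∀ π : Equiv.Perm (Fin 3 × Fin 2), ∃ t : ℕ, SolvableIn (Grid2 3 2) 1 π t) ∧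
    (∃ C : ℕ, ∀ π : Equiv.Perm (Fin 3 × Fin 2), ∃ t ≤ C, SolvableIn (Grid2 3 2) 1 π t) := by
  constructor
  · exact fun π => reach_all π
  · have h : ∀ π : Equiv.Perm (Fin 3 × Fin 2), ∃ t, SolvableIn (Grid2 3 2) 1 π t :=
      fun π => reach_all π
    choose t ht using h
    exact ⟨Finset.univ.sup t, fun π => ⟨t π, Finset.le_sup (Finset.mem_univ π), ht π⟩⟩
end

section
/- There is an absolute constant C such that the following holds (grid-embedded version of Lemma: rearrangement of indistinguishable robots on a path). Let G be the m_1 × m_2 grid graph with m_2 ≥ 2, let r be a row index with 0 ≤ r ≤ m_2 − 2, and write row r for the set of vertices whose second coordinate equals r. For any two subsets S, T of row r with |S| = |T|, there is a sequence of at most C·m_1 valid moves starting from the identity configuration whose final configuration σ satisfies σ(S) = T and σ(v) = v for every vertex v lying outside rows r and r+1. -/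
section MoveLemmas

variable {V : Type*} {G : SimpleGraph V}

theorem validMove_symm {X Y : Equiv.Perm V} (h : ValidMove G X Y) : ValidMove G Y X := by
  obtain ⟨h1, h2⟩ := h
  constructor
  · intro i
    rcases h1 i with h | h
    · exact Or.inl h.symm
    · exact Or.inr h.symm
  · intro i j hij e e2
    exact h2 j i (Ne.symm hij) e.symm e2.symm

theorem validMove_mul_right {X Y : Equiv.Perm V} (h : ValidMove G X Y) (ρ : Equiv.Perm V) :
    ValidMove G (X * ρ) (Y * ρ) := by
  obtain ⟨h1, h2⟩ := h
  constructor
  · intro i; simpa using h1 (ρ i)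
  · intro i j hij e
    simp only [Equiv.Perm.mul_apply] at *
    exact h2 (ρ i) (ρ j) (fun c => hij (ρ.injective c)) e

theorem validMove_step (μ X : Equiv.Perm V)
    (hadj : ∀ v, μ v = v ∨ G.Adj v (μ v))
    (hsw : ∀ a b : V, a ≠ b → μ b = a → μ a ≠ b) :
    ValidMove G X (μ * X) := by
  constructor
  · intro i; simpa using hadj (X i)
  · intro i j hij e e2
    simp only [Equiv.Perm.mul_apply] at *
    exact hsw (X i) (X j) (fun c => hij (X.injective c)) e.symm e2.symm

end MoveLemmas

namespace RowRe

/-- `c` is a column holding a token that can move left this round. -/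
def Mover (m₁ : ℕ) {k : ℕ} (p : Fin k → ℕ) (c : ℕ) : Prop :=
  ∃ i : Fin k, p i = c ∧ (i : ℕ) < c ∧ c < m₁ ∧ ∀ j, p j ≠ c - 1

open Classical in
noncomputable def nextP (m₁ : ℕ) {k : ℕ} (p : Fin k → ℕ) (i : Fin k) : ℕ :=
  if Mover m₁ p (p i) then p i - 1 else p i

variable {m₁ m₂ r k : ℕ}

lemma mover_pos {p : Fin k → ℕ} {c : ℕ} (h : Mover m₁ p c) : 1 ≤ c := by
  obtain ⟨i, _, h2, _⟩ := h; omega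

lemma mover_lt {p : Fin k → ℕ} {c : ℕ} (h : Mover m₁ p c) : c < m₁ := by
  obtain ⟨i, _, _, h3, _⟩ := h; exact h3

lemma mover_token {p : Fin k → ℕ} {c : ℕ} (h : Mover m₁ p c) : ∃ i, p i = c :=
  ⟨h.choose, h.choose_spec.1⟩

lemma mover_not_succ {p : Fin k → ℕ} {c : ℕ} (h : Mover m₁ p c) : ¬ Mover m₁ p (c + 1) := by
  obtain ⟨i, h1, _⟩ := h
  rintro ⟨i', g1, g2, g3, g4⟩
  exact g4 i (by omega)

lemma mover_ne_succ {p : Fin k → ℕ} {c d : ℕ} (hc : Mover m₁ p c) (hd : Mover m₁ p d)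
    (h : d + 1 = c) : False := by
  obtain ⟨i, h1, _⟩ := hd
  obtain ⟨i', g1, g2, g3, g4⟩ := hc
  exact g4 i (by omega)

open Classical in
noncomputable def stepFun (m₁ m₂ r : ℕ) {k : ℕ} (hr : r + 1 < m₂) (p : Fin k → ℕ)
    (v : Fin m₁ × Fin m₂) : Fin m₁ × Fin m₂ :=
  if h1 : (v.2 : ℕ) = r ∧ Mover m₁ p (v.1 : ℕ) then
    (⟨(v.1 : ℕ) - 1, Nat.lt_of_le_of_lt (Nat.sub_le _ 1) v.1.isLt⟩, v.2)
  else if h2 : (v.2 : ℕ) = r ∧ Mover m₁ p ((v.1 : ℕ) + 1) then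
    (v.1, ⟨r + 1, hr⟩)
  else if h3 : (v.2 : ℕ) = r + 1 ∧ Mover m₁ p ((v.1 : ℕ) + 1) then
    (⟨(v.1 : ℕ) + 1, mover_lt h3.2⟩, v.2)
  else if h4 : (v.2 : ℕ) = r + 1 ∧ Mover m₁ p (v.1 : ℕ) then
    (v.1, ⟨r, by omega⟩)
  else v

open Classical in
noncomputable def stepInv (m₁ m₂ r : ℕ) {k : ℕ} (hr : r + 1 < m₂) (p : Fin k → ℕ)
    (v : Fin m₁ × Fin m₂) : Fin m₁ × Fin m₂ :=
  if h1 : (v.2 : ℕ) = r ∧ Mover m₁ p ((v.1 : ℕ) + 1) then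
    (⟨(v.1 : ℕ) + 1, mover_lt h1.2⟩, v.2)
  else if h2 : (v.2 : ℕ) = r ∧ Mover m₁ p (v.1 : ℕ) then
    (v.1, ⟨r + 1, hr⟩)
  else if h3 : (v.2 : ℕ) = r + 1 ∧ Mover m₁ p (v.1 : ℕ) then
    (⟨(v.1 : ℕ) - 1, Nat.lt_of_le_of_lt (Nat.sub_le _ 1) v.1.isLt⟩, v.2)
  else if h4 : (v.2 : ℕ) = r + 1 ∧ Mover m₁ p ((v.1 : ℕ) + 1) then
    (v.1, ⟨r, by omega⟩)
  else v


lemma step_leftInverse (hr : r + 1 < m₂) (p : Fin k → ℕ) :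
    Function.LeftInverse (stepInv m₁ m₂ r hr p) (stepFun m₁ m₂ r hr p) := by
  intro v
  by_cases hy : (v.2 : ℕ) = r
  · by_cases hM1 : Mover m₁ p (v.1 : ℕ)
    · -- token moves left
      have hpos := mover_pos hM1
      rw [stepFun, dif_pos ⟨hy, hM1⟩, stepInv,
        dif_pos (show _ ∧ Mover m₁ p _ from ⟨hy, by simpa [Nat.sub_add_cancel hpos] using hM1⟩)]
      simp [Prod.ext_iff, Fin.ext_iff]
      omega
    · by_cases hM2 : Mover m₁ p ((v.1 : ℕ) + 1)
      · -- kicked up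
        rw [stepFun, dif_neg (by tauto), dif_pos ⟨hy, hM2⟩, stepInv,
          dif_neg (by simp), dif_neg (by simp),
          dif_neg (by simpa using hM1), dif_pos ⟨by simp, hM2⟩]
        simp [Prod.ext_iff, Fin.ext_iff]
        omega
      · rw [stepFun, dif_neg (by tauto), dif_neg (by tauto),
          dif_neg (by rw [hy]; simp), dif_neg (by rw [hy]; simp), stepInv,
          dif_neg (by tauto), dif_neg (by tauto),
          dif_neg (by rw [hy]; simp), dif_neg (by rw [hy]; simp)]
  · by_cases hy2 : (v.2 : ℕ) = r + 1
    · by_cases hM3 : Mover m₁ p ((v.1 : ℕ) + 1)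
      · -- shifted right in row r+1
        rw [stepFun, dif_neg (by tauto), dif_neg (by tauto), dif_pos ⟨hy2, hM3⟩, stepInv,
          dif_neg (fun h => hy h.1), dif_neg (fun h => hy h.1),
          dif_pos ⟨hy2, by simpa using hM3⟩]
        simp [Prod.ext_iff, Fin.ext_iff]
      · by_cases hM4 : Mover m₁ p (v.1 : ℕ)
        · -- dropped down
          rw [stepFun, dif_neg (by tauto), dif_neg (by tauto), dif_neg (by tauto),
            dif_pos ⟨hy2, hM4⟩, stepInv,
            dif_neg (by simpa using hM3), dif_pos ⟨by simp, hM4⟩]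
          simp [Prod.ext_iff, Fin.ext_iff]
          omega
        · rw [stepFun, dif_neg (by tauto), dif_neg (by tauto), dif_neg (by tauto),
            dif_neg (by tauto), stepInv,
            dif_neg (by tauto), dif_neg (by tauto), dif_neg (by tauto), dif_neg (by tauto)]
    · rw [stepFun, dif_neg (by tauto), dif_neg (by tauto), dif_neg (by tauto),
        dif_neg (by tauto), stepInv,
        dif_neg (by tauto), dif_neg (by tauto), dif_neg (by tauto), dif_neg (by tauto)]


noncomputable def stepPerm (m₁ m₂ r : ℕ) {k : ℕ} (hr : r + 1 < m₂) (p : Fin k → ℕ) :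
    Equiv.Perm (Fin m₁ × Fin m₂) :=
  Equiv.ofBijective (stepFun m₁ m₂ r hr p)
    (Finite.injective_iff_bijective.mp (step_leftInverse hr p).injective)

lemma stepPerm_apply (hr : r + 1 < m₂) (p : Fin k → ℕ) (v : Fin m₁ × Fin m₂) :
    stepPerm m₁ m₂ r hr p v = stepFun m₁ m₂ r hr p v := rfl

lemma step_fix (hr : r + 1 < m₂) (p : Fin k → ℕ) (v : Fin m₁ × Fin m₂)
    (h1 : (v.2 : ℕ) ≠ r) (h2 : (v.2 : ℕ) ≠ r + 1) :
    stepFun m₁ m₂ r hr p v = v := by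
  rw [stepFun, dif_neg (by tauto), dif_neg (by tauto), dif_neg (by tauto), dif_neg (by tauto)]

lemma step_adj (hr : r + 1 < m₂) (p : Fin k → ℕ) (v : Fin m₁ × Fin m₂) :
    stepFun m₁ m₂ r hr p v = v ∨ (Grid2 m₁ m₂).Adj v (stepFun m₁ m₂ r hr p v) := by
  rw [stepFun]
  split_ifs with h1 h2 h3 h4
  · have := mover_pos h1.2
    exact Or.inr (Or.inl ⟨by simp; omega, rfl⟩)
  · exact Or.inr (Or.inr ⟨rfl, by simp [h2.1]⟩)
  · exact Or.inr (Or.inl ⟨by simp, rfl⟩)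
  · exact Or.inr (Or.inr ⟨rfl, by simp [h4.1]⟩)
  · exact Or.inl rfl

lemma step_noswap (hr : r + 1 < m₂) (p : Fin k → ℕ) (a b : Fin m₁ × Fin m₂)
    (hne : a ≠ b) (e1 : stepFun m₁ m₂ r hr p b = a) : stepFun m₁ m₂ r hr p a ≠ b := by
  intro e2
  rw [stepFun] at e1
  split_ifs at e1 with h1 h2 h3 h4
  · -- a = (b.1 - 1, b.2), row r
    subst e1
    rw [stepFun] at e2
    split_ifs at e2 with g1 g2 g3 g4
    · exact mover_ne_succ h1.2 g1.2 (by have := mover_pos h1.2; simp; omega)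
    · simp [Prod.ext_iff, Fin.ext_iff, h1.1] at e2
    · simp [h1.1] at g3
    · simp [h1.1] at g4
    · have := mover_pos h1.2
      simp [Prod.ext_iff, Fin.ext_iff] at e2
      omega
  · -- a = (b.1, r+1)
    subst e1
    rw [stepFun] at e2
    split_ifs at e2 with g1 g2 g3 g4
    · simp at g1
    · simp at g2
    · simp [Prod.ext_iff, Fin.ext_iff, h2.1] at e2
    · exact h1 ⟨h2.1, by simpa using g4.2⟩
    · exact g3 ⟨by simp, by simpa using h2.2⟩
  · -- a = (b.1 + 1, b.2), row r+1
    subst e1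
    rw [stepFun] at e2
    split_ifs at e2 with g1 g2 g3 g4
    · simp [h3.1] at g1
    · simp [h3.1] at g2
    · simp [Prod.ext_iff, Fin.ext_iff] at e2 <;> omega
    · simp [Prod.ext_iff, Fin.ext_iff, h3.1] at e2
  · -- a = (b.1, r)
    subst e1
    rw [stepFun] at e2
    split_ifs at e2 with g1 g2 g3 g4
    · simp [Prod.ext_iff, Fin.ext_iff, h4.1] at e2
    · exact h3 ⟨h4.1, by simpa using g2.2⟩
    · simp at g3
    · simp at g4
    · exact g1 ⟨by simp, by simpa using h4.2⟩
  · exact hne e1.symm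

lemma step_token (hr : r + 1 < m₂) (p : Fin k → ℕ) (i : Fin k) (w : Fin m₁ × Fin m₂)
    (hw2 : (w.2 : ℕ) = r) (hw1 : (w.1 : ℕ) = p i) :
    ((stepFun m₁ m₂ r hr p w).1 : ℕ) = nextP m₁ p i ∧
      ((stepFun m₁ m₂ r hr p w).2 : ℕ) = r := by
  by_cases hM : Mover m₁ p (p i)
  · rw [stepFun, dif_pos ⟨hw2, by rw [hw1]; exact hM⟩]
    exact ⟨by simp [nextP, hM, hw1], hw2⟩
  · have hn2 : ¬ ((w.2 : ℕ) = r ∧ Mover m₁ p ((w.1 : ℕ) + 1)) := by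
      rintro ⟨-, hm⟩
      obtain ⟨i', e1, e2, e3, e4⟩ := hm
      exact e4 i (by omega)
    rw [stepFun, dif_neg (by rintro ⟨-, hm⟩; rw [hw1] at hm; exact hM hm), dif_neg hn2,
      dif_neg (by rintro ⟨h, -⟩; omega), dif_neg (by rintro ⟨h, -⟩; omega)]
    exact ⟨by simp [nextP, hM, hw1], hw2⟩

lemma strictMono_le {p : Fin k → ℕ} (hp : StrictMono p) (i : Fin k) : (i : ℕ) ≤ p i := by
  have H : ∀ n (h : n < k), n ≤ p ⟨n, h⟩ := by
    intro n
    induction n with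
    | zero => intro h; exact Nat.zero_le _
    | succ n ih =>
      intro h
      have h' : n < k := by omega
      have h1 := hp (show (⟨n, h'⟩ : Fin k) < ⟨n + 1, h⟩ from by simp [Fin.lt_def])
      have h2 := ih h'
      omega
  simpa using H i i.isLt

lemma strictMono_add_le {p : Fin k → ℕ} (hp : StrictMono p) (a b : Fin k)
    (h : (a : ℕ) ≤ b) : p a + ((b : ℕ) - a) ≤ p b := by
  have H : ∀ d (hd : (a : ℕ) + d < k), p a + d ≤ p ⟨(a : ℕ) + d, hd⟩ := by
    intro d
    induction d with
    | zero =>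
      intro hd
      exact le_of_eq (by congr 1 <;> simp)
    | succ d ih =>
      intro hd
      have hd' : (a : ℕ) + d < k := by omega
      have h1 := ih hd'
      have h2 := hp (show (⟨(a : ℕ) + d, hd'⟩ : Fin k) < ⟨(a : ℕ) + (d + 1), hd⟩ from by
        simp [Fin.lt_def])
      omega
  have hd : (a : ℕ) + ((b : ℕ) - a) < k := by have := b.isLt; omega
  have h3 := H ((b : ℕ) - a) hd
  rwa [show (⟨(a : ℕ) + ((b : ℕ) - a), hd⟩ : Fin k) = b from Fin.ext (by simp; omega)] at h3

lemma mover_self {p : Fin k → ℕ} (hp : StrictMono p) {i : Fin k}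
    (h : Mover m₁ p (p i)) : (i : ℕ) < p i ∧ p i < m₁ ∧ ∀ j, p j ≠ p i - 1 := by
  obtain ⟨i', h1, h2, h3, h4⟩ := h
  have : i' = i := hp.injective h1
  subst this
  exact ⟨h2, h3, h4⟩

lemma nextP_le (p : Fin k → ℕ) (i : Fin k) : nextP m₁ p i ≤ p i := by
  rw [nextP]; split_ifs <;> omega

lemma nextP_lt {p : Fin k → ℕ} (hlt : ∀ i, p i < m₁) (i : Fin k) : nextP m₁ p i < m₁ :=
  lt_of_le_of_lt (nextP_le p i) (hlt i)

lemma nextP_strictMono {p : Fin k → ℕ} (hp : StrictMono p) : StrictMono (nextP m₁ p) := by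
  intro i j hij
  have hlt := hp hij
  rw [nextP, nextP]
  split_ifs with hi hj hj2
  · have := mover_pos hi; omega
  · omega
  · obtain ⟨i', e1, e2, e3, e4⟩ := hj2
    have := e4 i
    omega
  · omega

lemma nextP_ge {p : Fin k → ℕ} (hp : StrictMono p) (i : Fin k) : (i : ℕ) ≤ nextP m₁ p i := by
  rw [nextP]; split_ifs with h
  · have := (mover_self hp h).1; omega
  · exact strictMono_le hp i

noncomputable def Pseq (m₁ : ℕ) {k : ℕ} (s : Fin k → ℕ) : ℕ → Fin k → ℕ
  | 0 => s
  | τ + 1 => nextP m₁ (Pseq m₁ s τ)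

lemma pseq_strictMono {s : Fin k → ℕ} (hs : StrictMono s) (τ : ℕ) :
    StrictMono (Pseq m₁ s τ) := by
  induction τ with
  | zero => exact hs
  | succ τ ih => exact nextP_strictMono ih

lemma pseq_lt {s : Fin k → ℕ} (hlt : ∀ i, s i < m₁) (τ : ℕ) (i : Fin k) :
    Pseq m₁ s τ i < m₁ := by
  induction τ with
  | zero => exact hlt i
  | succ τ ih => exact lt_of_le_of_lt (nextP_le _ i) ih

lemma pseq_bound {s : Fin k → ℕ} (hs : StrictMono s) (hlt : ∀ i, s i < m₁) (τ : ℕ)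
    (i : Fin k) : Pseq m₁ s τ i ≤ i ∨ Pseq m₁ s τ i + τ ≤ s i + i := by
  induction τ generalizing i with
  | zero => right; simp [Pseq]
  | succ τ ih =>
    have hmono := pseq_strictMono (m₁ := m₁) hs τ
    have hltτ : ∀ j, Pseq m₁ s τ j < m₁ := pseq_lt hlt τ
    show Pseq m₁ s τ.succ i ≤ _ ∨ Pseq m₁ s τ.succ i + _ ≤ _
    have hstep : Pseq m₁ s τ.succ i = nextP m₁ (Pseq m₁ s τ) i := rfl
    rw [hstep, nextP]
    split_ifs with hM
    · have hpos := mover_pos hM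
      rcases ih i with h | h
      · left; omega
      · right; omega
    · by_cases hle : Pseq m₁ s τ i ≤ (i : ℕ)
      · left; exact hle
      · have hex : ∃ j, Pseq m₁ s τ j = Pseq m₁ s τ i - 1 := by
          by_contra hno
          push_neg at hno
          exact hM ⟨i, rfl, by omega, hltτ i, hno⟩
        obtain ⟨j, hj⟩ := hex
        have hji : (j : ℕ) < i := by
          have hpj : Pseq m₁ s τ j < Pseq m₁ s τ i := by omega
          exact hmono.lt_iff_lt.mp hpj
        have hsji := strictMono_add_le hs j i (le_of_lt hji)
        rcases ih j with h | h
        · left; omega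
        · right; omega

lemma pseq_done {s : Fin k → ℕ} (hs : StrictMono s) (hlt : ∀ i, s i < m₁) (hk : k ≤ m₁)
    (i : Fin k) : Pseq m₁ s (2 * m₁) i = (i : ℕ) := by
  have h1 := pseq_bound hs hlt (2 * m₁) i
  have h2 := strictMono_le (pseq_strictMono (m₁ := m₁) hs (2 * m₁)) i
  have h3 := hlt i
  have h4 : (i : ℕ) < k := i.isLt
  omega

noncomputable def Xseq (m₁ m₂ r : ℕ) {k : ℕ} (hr : r + 1 < m₂) (s : Fin k → ℕ) :
    ℕ → Equiv.Perm (Fin m₁ × Fin m₂)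
  | 0 => 1
  | τ + 1 => stepPerm m₁ m₂ r hr (Pseq m₁ s τ) * Xseq m₁ m₂ r hr s τ

lemma xseq_fix (hr : r + 1 < m₂) (s : Fin k → ℕ) (v : Fin m₁ × Fin m₂)
    (h1 : (v.2 : ℕ) ≠ r) (h2 : (v.2 : ℕ) ≠ r + 1) (τ : ℕ) :
    Xseq m₁ m₂ r hr s τ v = v := by
  induction τ with
  | zero => rfl
  | succ τ ih =>
    show (stepPerm m₁ m₂ r hr (Pseq m₁ s τ) * Xseq m₁ m₂ r hr s τ) v = v
    rw [Equiv.Perm.mul_apply, ih, stepPerm_apply, step_fix hr _ v h1 h2]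

lemma xseq_token {s : Fin k → ℕ} (hr : r + 1 < m₂) (v : Fin m₁ × Fin m₂)
    (hv2 : (v.2 : ℕ) = r) (i : Fin k) (hv1 : (v.1 : ℕ) = s i) (τ : ℕ) :
    ((Xseq m₁ m₂ r hr s τ v).1 : ℕ) = Pseq m₁ s τ i ∧
      ((Xseq m₁ m₂ r hr s τ v).2 : ℕ) = r := by
  induction τ with
  | zero => exact ⟨hv1, hv2⟩
  | succ τ ih =>
    have h := step_token hr (Pseq m₁ s τ) i (Xseq m₁ m₂ r hr s τ v) ih.2 ih.1
    show ((stepPerm m₁ m₂ r hr (Pseq m₁ s τ) * Xseq m₁ m₂ r hr s τ) v).1.val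
        = nextP m₁ (Pseq m₁ s τ) i ∧
      ((stepPerm m₁ m₂ r hr (Pseq m₁ s τ) * Xseq m₁ m₂ r hr s τ) v).2.val = r
    rw [Equiv.Perm.mul_apply, stepPerm_apply]
    exact h

end RowRe

/-- Rearrangement of indistinguishable robots within a row: on an `m₁ × m₂`
grid, any set `S` of robots in row `r` can be sent onto any equal-sized target
set `T` in row `r` using `O(m₁)` moves, touching only rows `r` and `r+1`. -/
theorem row_rearrangement_linear_makespan :
    ∃ C : ℕ, ∀ m₁ m₂ : ℕ, 2 ≤ m₁ → 2 ≤ m₂ → ∀ r : ℕ, r + 2 ≤ m₂ →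
      ∀ S T : Finset (Fin m₁ × Fin m₂),
        (∀ v ∈ S, (v.2 : ℕ) = r) → (∀ v ∈ T, (v.2 : ℕ) = r) →
        S.card = T.card →
        ∃ t ≤ C * m₁, ∃ σ : Equiv.Perm (Fin m₁ × Fin m₂),
          SolvableIn (Grid2 m₁ m₂) 1 σ t ∧
          S.image (⇑σ) = T ∧
          (∀ v : Fin m₁ × Fin m₂, (v.2 : ℕ) ≠ r → (v.2 : ℕ) ≠ r + 1 → σ v = v) := by
  classical
  refine ⟨4, ?_⟩
  intro m₁ m₂ hm₁ hm₂ r hrm S T hS hT hST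
  have hr : r + 1 < m₂ := by omega
  set k := S.card with hk
  have hinjS : Set.InjOn (Prod.fst : Fin m₁ × Fin m₂ → Fin m₁) ↑S := by
    intro u hu v hv huv
    have h1 := hS u hu; have h2 := hS v hv
    exact Prod.ext huv (Fin.ext (by omega))
  have hinjT : Set.InjOn (Prod.fst : Fin m₁ × Fin m₂ → Fin m₁) ↑T := by
    intro u hu v hv huv
    have h1 := hT u hu; have h2 := hT v hv
    exact Prod.ext huv (Fin.ext (by omega))
  set S' := S.image Prod.fst with hS'
  set T' := T.image Prod.fst with hT'
  have hS'card : S'.card = k := Finset.card_image_of_injOn hinjS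
  have hT'card : T'.card = k := by
    rw [hT', Finset.card_image_of_injOn hinjT, ← hST]
  have hk_le : k ≤ m₁ := by
    have h1 := Finset.card_le_univ S'
    simp only [Finset.card_univ, Fintype.card_fin] at h1
    omega
  set eS := S'.orderIsoOfFin hS'card with heS
  set eT := T'.orderIsoOfFin hT'card with heT
  set sS : Fin k → ℕ := fun i => ((eS i : Fin m₁) : ℕ) with hsS
  set sT : Fin k → ℕ := fun i => ((eT i : Fin m₁) : ℕ) with hsT
  have hsSmono : StrictMono sS := by
    intro a b hab
    exact eS.strictMono hab
  have hsTmono : StrictMono sT := by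
    intro a b hab
    exact eT.strictMono hab
  have hsSlt : ∀ i, sS i < m₁ := fun i => (eS i : Fin m₁).isLt
  have hsTlt : ∀ i, sT i < m₁ := fun i => (eT i : Fin m₁).isLt
  set XS := RowRe.Xseq m₁ m₂ r hr sS with hXS
  set XT := RowRe.Xseq m₁ m₂ r hr sT with hXT
  set σS := XS (2*m₁) with hσS
  set σT := XT (2*m₁) with hσT
  refine ⟨4*m₁, le_refl _, σT⁻¹ * σS, ?_, ?_, ?_⟩
  · -- SolvableIn
    refine ⟨fun τ => if τ ≤ 2*m₁ then XS τ else XT (4*m₁ - τ) * (σT⁻¹ * σS), ?_, ?_, ?_⟩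
    · show (if (0:ℕ) ≤ 2*m₁ then XS 0 else XT (4*m₁ - 0) * (σT⁻¹ * σS)) = 1
      rw [if_pos (Nat.zero_le _)]
      rfl
    · show (if 4*m₁ ≤ 2*m₁ then XS (4*m₁) else XT (4*m₁ - 4*m₁) * (σT⁻¹ * σS)) = σT⁻¹ * σS
      rw [if_neg (by omega), Nat.sub_self]
      show (1 : Equiv.Perm (Fin m₁ × Fin m₂)) * (σT⁻¹ * σS) = σT⁻¹ * σS
      rw [one_mul]
    · intro s hs4
      by_cases hcase : s + 1 ≤ 2*m₁
      · have hs' : s ≤ 2*m₁ := by omega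
        show ValidMove _ (if s ≤ 2*m₁ then XS s else _) (if s+1 ≤ 2*m₁ then XS (s+1) else _)
        rw [if_pos hs', if_pos hcase]
        show ValidMove _ (XS s) (XS (s+1))
        have hstep : XS (s+1) = RowRe.stepPerm m₁ m₂ r hr (RowRe.Pseq m₁ sS s) * XS s := rfl
        rw [hstep]
        refine validMove_step _ _ (fun v => ?_) (fun a b hab e => ?_)
        · rw [RowRe.stepPerm_apply]; exact RowRe.step_adj hr _ v
        · rw [RowRe.stepPerm_apply] at e ⊢
          exact RowRe.step_noswap hr _ a b hab e
      · have hs2 : 2*m₁ ≤ s := by omega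
        have hXs : (if s ≤ 2*m₁ then XS s else XT (4*m₁ - s) * (σT⁻¹ * σS))
            = XT (4*m₁ - s) * (σT⁻¹ * σS) := by
          rcases eq_or_lt_of_le hs2 with he | hl
          · rw [if_pos he.ge, ← he]
            show σS = XT (4*m₁ - 2*m₁) * (σT⁻¹ * σS)
            have h42 : 4*m₁ - 2*m₁ = 2*m₁ := by omega
            rw [h42, ← hσT, mul_inv_cancel_left]
          · rw [if_neg (by omega)]
        have hXs1 : (if s+1 ≤ 2*m₁ then XS (s+1) else XT (4*m₁ - (s+1)) * (σT⁻¹ * σS))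
            = XT (4*m₁ - (s+1)) * (σT⁻¹ * σS) := if_neg hcase
        show ValidMove _ (if s ≤ 2*m₁ then XS s else XT (4*m₁ - s) * (σT⁻¹ * σS))
          (if s+1 ≤ 2*m₁ then XS (s+1) else XT (4*m₁ - (s+1)) * (σT⁻¹ * σS))
        rw [hXs, hXs1]
        have hd : 4*m₁ - s = (4*m₁ - (s+1)) + 1 := by omega
        rw [hd]
        apply validMove_mul_right
        apply validMove_symm
        have hstep : XT ((4*m₁-(s+1))+1)
            = RowRe.stepPerm m₁ m₂ r hr (RowRe.Pseq m₁ sT (4*m₁-(s+1))) * XT (4*m₁-(s+1)) := rfl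
        rw [hstep]
        refine validMove_step _ _ (fun v => ?_) (fun a b hab e => ?_)
        · rw [RowRe.stepPerm_apply]; exact RowRe.step_adj hr _ v
        · rw [RowRe.stepPerm_apply] at e ⊢
          exact RowRe.step_noswap hr _ a b hab e
  · -- image
    have key : ∀ v ∈ S, (σT⁻¹ * σS) v ∈ T := by
      intro v hv
      have hv1 : v.1 ∈ S' := Finset.mem_image_of_mem _ hv
      set i := eS.symm ⟨v.1, hv1⟩ with hi
      have hsi : (v.1 : ℕ) = sS i := by
        rw [hsS]
        simp only [hi, OrderIso.apply_symm_apply]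
      have hv2 : (v.2 : ℕ) = r := hS v hv
      have hA := RowRe.xseq_token (s := sS) hr v hv2 i hsi (2*m₁)
      set u : Fin m₁ × Fin m₂ := ((eT i : Fin m₁), ⟨r, by omega⟩) with hu
      have hB := RowRe.xseq_token (s := sT) hr u (by rw [hu]) i (by rw [hu]) (2*m₁)
      have hdS := RowRe.pseq_done hsSmono hsSlt hk_le i
      have hdT := RowRe.pseq_done hsTmono hsTlt hk_le i
      have heq : σS v = σT u := by
        refine Prod.ext (Fin.ext ?_) (Fin.ext ?_)
        · rw [hσS, hσT, hXS, hXT, hA.1, hB.1, hdS, hdT]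
        · rw [hσS, hσT, hXS, hXT, hA.2, hB.2]
      have hρ : (σT⁻¹ * σS) v = u := by
        rw [Equiv.Perm.mul_apply, heq]; exact σT.symm_apply_apply u
      rw [hρ]
      have hu1 : u.1 ∈ T' := (eT i).2
      obtain ⟨w, hw, hw1⟩ := Finset.mem_image.mp hu1
      have hwu : w = u := by
        refine Prod.ext hw1 (Fin.ext ?_)
        rw [hT w hw]
      rwa [← hwu]
    have hsub : S.image (⇑(σT⁻¹ * σS)) ⊆ T := by
      intro w hw
      obtain ⟨v, hv, rfl⟩ := Finset.mem_image.mp hw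
      exact key v hv
    refine Finset.eq_of_subset_of_card_le hsub (le_of_eq ?_)
    rw [Finset.card_image_of_injective _ (σT⁻¹ * σS).injective, ← hk, ← hST]
  · -- fixes other rows
    intro v h1 h2
    have e1 : σS v = v := RowRe.xseq_fix hr sS v h1 h2 (2*m₁)
    have e2 : σT v = v := RowRe.xseq_fix hr sT v h1 h2 (2*m₁)
    rw [Equiv.Perm.mul_apply, e1]
    calc σT⁻¹ v = σT⁻¹ (σT v) := by rw [e2]
    _ = v := σT.symm_apply_apply v
end

section
/- Circulation decomposition: let G = (V,E) be a finite simple graph, let f ≥ 1 be an integer, and let c be a circulation on G whose in-flow at every vertex is at most f. Then there exist circulations c_1, ..., c_f on G, each having in-flow at most 1 at every vertex (unit circulations), such that c = c_1 + ⋯ + c_f. -/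
/-- A circulation on a finite simple graph `G`: a natural-valued function on
ordered pairs that vanishes on non-edges and is conserved at every vertex. -/
def IsCirculation {V : Type*} [Fintype V] (G : SimpleGraph V) (c : V → V → ℕ) : Prop :=
  (∀ u v, ¬ G.Adj u v → c u v = 0) ∧
  (∀ v, ∑ u, c u v = ∑ w, c v w)

open Finset

/-- Extraction lemma: from a circulation with in-flow at most `F ≥ 1`, extract a
unit sub-circulation whose removal leaves a circulation with in-flow at most `F - 1`. -/
lemma extract_unit {V : Type*} [Fintype V] (G : SimpleGraph V)
    (F : ℕ) (hF : 1 ≤ F) (c : V → V → ℕ) (hc : IsCirculation G c)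
    (hin : ∀ v, ∑ u, c u v ≤ F) :
    ∃ c₁ : V → V → ℕ, IsCirculation G c₁ ∧ (∀ v, (∑ u, c₁ u v) ≤ 1) ∧
      (∀ u v, c₁ u v ≤ c u v) ∧ IsCirculation G (fun u v => c u v - c₁ u v) ∧
      (∀ v, (∑ u, (c u v - c₁ u v)) ≤ F - 1) := by
  classical
  set N : V → Finset V :=
    fun v => univ.filter (fun w => 1 ≤ c v w ∨ (w = v ∧ (∑ u, c u v) < F)) with hNdef
  have hmemN : ∀ v w, w ∈ N v ↔ (1 ≤ c v w ∨ (w = v ∧ (∑ u, c u v) < F)) := by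
    intro v w; simp [hNdef]
  -- Hall's condition
  have hall : ∀ S : Finset V, S.card ≤ (S.biUnion N).card := by
    intro S
    set T := S.biUnion N with hT
    have hTmem : ∀ v ∈ S, ∀ w, w ∈ N v → w ∈ T := by
      intro v hv w hw; exact mem_biUnion.mpr ⟨v, hv, hw⟩
    have key : F * S.card ≤ F * T.card := by
      have step1 : (∑ v ∈ S, ∑ w, c v w) ≤ ∑ w ∈ T, ∑ u, c u w := by
        have h1 : ∀ v ∈ S, (∑ w, c v w) = ∑ w ∈ T, c v w := by
          intro v hv
          refine (Finset.sum_subset (subset_univ T) ?_).symm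
          intro w _ hw
          by_contra hne
          exact hw (hTmem v hv w ((hmemN v w).mpr (Or.inl (Nat.one_le_iff_ne_zero.mpr hne))))
        calc (∑ v ∈ S, ∑ w, c v w) = ∑ v ∈ S, ∑ w ∈ T, c v w :=
              Finset.sum_congr rfl h1
          _ = ∑ w ∈ T, ∑ v ∈ S, c v w := Finset.sum_comm
          _ ≤ ∑ w ∈ T, ∑ u, c u w := by
              refine Finset.sum_le_sum fun w _ => ?_
              exact Finset.sum_le_sum_of_subset (subset_univ S)
      have step2 : (∑ v ∈ S, (F - ∑ u, c u v)) ≤ ∑ w ∈ T, (F - ∑ u, c u w) := by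
        have hsub : S.filter (fun v => (F - ∑ u, c u v) ≠ 0) ⊆ T := by
          intro v hv
          rw [mem_filter] at hv
          obtain ⟨hv1, hv2⟩ := hv
          have hlt : (∑ u, c u v) < F := by omega
          exact hTmem v hv1 v ((hmemN v v).mpr (Or.inr ⟨rfl, hlt⟩))
        have heq : (∑ v ∈ S.filter (fun v => (F - ∑ u, c u v) ≠ 0), (F - ∑ u, c u v))
            = ∑ v ∈ S, (F - ∑ u, c u v) := by
          refine Finset.sum_subset (Finset.filter_subset _ _) fun x hx hnx => ?_
          by_contra h
          exact hnx (Finset.mem_filter.mpr ⟨hx, h⟩)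
        calc (∑ v ∈ S, (F - ∑ u, c u v))
            = ∑ v ∈ S.filter (fun v => (F - ∑ u, c u v) ≠ 0), (F - ∑ u, c u v) := heq.symm
          _ ≤ ∑ w ∈ T, (F - ∑ u, c u w) := Finset.sum_le_sum_of_subset hsub
      calc F * S.card = ∑ v ∈ S, F := by rw [Finset.sum_const, smul_eq_mul, mul_comm]
        _ = ∑ v ∈ S, ((∑ w, c v w) + (F - ∑ u, c u v)) := by
            refine Finset.sum_congr rfl fun v _ => ?_
            rw [← hc.2 v, Nat.add_sub_cancel' (hin v)]
        _ = (∑ v ∈ S, ∑ w, c v w) + ∑ v ∈ S, (F - ∑ u, c u v) :=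
            Finset.sum_add_distrib
        _ ≤ (∑ w ∈ T, ∑ u, c u w) + ∑ w ∈ T, (F - ∑ u, c u w) :=
            Nat.add_le_add step1 step2
        _ = ∑ w ∈ T, ((∑ u, c u w) + (F - ∑ u, c u w)) := Finset.sum_add_distrib.symm
        _ = ∑ w ∈ T, F := Finset.sum_congr rfl fun w _ => Nat.add_sub_cancel' (hin w)
        _ = F * T.card := by rw [Finset.sum_const, smul_eq_mul, mul_comm]
    exact Nat.le_of_mul_le_mul_left key (Nat.lt_of_lt_of_le Nat.zero_lt_one hF)
  obtain ⟨σ, hinj, hσ⟩ := (Finset.all_card_le_biUnion_card_iff_exists_injective N).mp hall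
  have hbij : Function.Bijective σ := Finite.injective_iff_bijective.mp hinj
  set e : V ≃ V := Equiv.ofBijective σ hbij with he
  have heapp : ∀ v, e v = σ v := fun v => rfl
  set c₁ : V → V → ℕ := fun u v => if σ u = v ∧ u ≠ v then 1 else 0 with hc₁def
  have hσmem : ∀ v, 1 ≤ c v (σ v) ∨ (σ v = v ∧ (∑ u, c u v) < F) := by
    intro v; exact (hmemN v (σ v)).mp (hσ v)
  have hle : ∀ u v, c₁ u v ≤ c u v := by
    intro u v
    simp only [hc₁def]
    split_ifs with h
    · obtain ⟨h1, h2⟩ := h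
      rcases hσmem u with h3 | ⟨h3, _⟩
      · rw [h1] at h3; exact h3
      · exact absurd (h1 ▸ h3 : (v : V) = u) (Ne.symm h2)
    · exact Nat.zero_le _
  have hout : ∀ v, (∑ w, c₁ v w) = if σ v = v then 0 else 1 := by
    intro v
    by_cases h : σ v = v
    · rw [if_pos h]
      refine Finset.sum_eq_zero fun w _ => ?_
      simp only [hc₁def]
      rw [if_neg]
      rintro ⟨h1, h2⟩
      exact h2 (by rw [← h1, h])
    · rw [if_neg h]
      rw [Finset.sum_eq_single (σ v)]
      · have hv : v ≠ σ v := fun hv => h hv.symm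
        simp [hc₁def, hv]
      · intro w _ hw
        simp only [hc₁def]
        rw [if_neg]
        rintro ⟨h1, _⟩
        exact hw h1.symm
      · intro habs; exact absurd (mem_univ (σ v)) habs
  have hinflow : ∀ v, (∑ u, c₁ u v) = if σ v = v then 0 else 1 := by
    intro v
    have hp : σ (e.symm v) = v := Equiv.ofBijective_apply_symm_apply σ hbij v
    have hiff : e.symm v = v ↔ σ v = v := by
      constructor
      · intro h; rw [h] at hp; exact hp
      · intro h
        have hev : e v = v := (heapp v).trans h
        conv_lhs => rw [← hev]
        exact e.symm_apply_apply v
    rw [Finset.sum_eq_single (e.symm v)]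
    · simp only [hc₁def]
      by_cases h : σ v = v
      · rw [if_pos h, if_neg]
        rintro ⟨_, h2⟩
        exact h2 (hiff.mpr h)
      · rw [if_neg h, if_pos ⟨hp, fun h2 => h (hiff.mp h2)⟩]
    · intro u _ hu
      simp only [hc₁def]
      rw [if_neg]
      rintro ⟨h1, _⟩
      apply hu
      have hev : e u = v := (heapp u).trans h1
      rw [← hev, Equiv.symm_apply_apply]
    · intro habs; exact absurd (mem_univ _) habs
  have hcons₁ : ∀ v, (∑ u, c₁ u v) = ∑ w, c₁ v w := by
    intro v; rw [hout v, hinflow v]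
  have hcirc₁ : IsCirculation G c₁ := by
    refine ⟨fun u v hne => ?_, hcons₁⟩
    have := hle u v
    rw [hc.1 u v hne] at this
    omega
  have hself : ∀ v, c v v = 0 := fun v => hc.1 v v (G.irrefl)
  refine ⟨c₁, hcirc₁, ?_, hle, ⟨?_, ?_⟩, ?_⟩
  · intro v; rw [hinflow v]; split_ifs <;> omega
  · intro u v hne
    show c u v - c₁ u v = 0
    rw [hc.1 u v hne]
    omega
  · intro v
    show (∑ u, (c u v - c₁ u v)) = ∑ w, (c v w - c₁ v w)
    rw [Finset.sum_tsub_distrib univ (fun u _ => hle u v),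
        Finset.sum_tsub_distrib univ (fun w _ => hle v w), hc.2 v, hcons₁ v]
  · intro v
    rw [Finset.sum_tsub_distrib univ (fun u _ => hle u v), hinflow v]
    by_cases h : σ v = v
    · rw [if_pos h]
      rcases hσmem v with h3 | ⟨_, h3⟩
      · rw [h, hself v] at h3; omega
      · omega
    · rw [if_neg h]
      have := hin v
      omega

/-- Circulation decomposition: a circulation with in-flow at most `f ≥ 1` at
every vertex decomposes into `f` unit circulations (circulations with in-flow
at most 1 at every vertex). -/
theorem circulation_decomposition {V : Type*} [Fintype V] (G : SimpleGraph V)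
    (f : ℕ) (hf : 1 ≤ f) (c : V → V → ℕ) (hc : IsCirculation G c)
    (hin : ∀ v, ∑ u, c u v ≤ f) :
    ∃ cs : Fin f → V → V → ℕ,
      (∀ i, IsCirculation G (cs i)) ∧
      (∀ i v, ∑ u, cs i u v ≤ 1) ∧
      (∀ u v, c u v = ∑ i, cs i u v) := by
  obtain ⟨n, rfl⟩ : ∃ n, f = n + 1 := ⟨f - 1, (Nat.succ_pred_eq_of_pos hf).symm⟩
  clear hf
  induction n generalizing c with
  | zero =>
    exact ⟨fun _ => c, fun _ => hc, fun i v => by simpa using hin v,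
      fun u v => by simp⟩
  | succ n ih =>
    obtain ⟨c₁, hc₁, hu₁, hle, hc₂, hin₂⟩ :=
      extract_unit G (n + 2) (by omega) c hc hin
    obtain ⟨cs, h1, h2, h3⟩ := ih (fun u v => c u v - c₁ u v) hc₂ hin₂
    refine ⟨Fin.cons c₁ cs, ?_, ?_, ?_⟩
    · intro i
      refine i.cases ?_ fun j => ?_
      · rw [Fin.cons_zero]; exact hc₁
      · rw [Fin.cons_succ]; exact h1 j
    · intro i v
      refine i.cases ?_ fun j => ?_
      · simpa only [Fin.cons_zero] using hu₁ v
      · simpa only [Fin.cons_succ] using h2 j v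
    · intro u v
      rw [Fin.sum_univ_succ]
      simp only [Fin.cons_zero, Fin.cons_succ]
      rw [← h3 u v]
      have := hle u v
      omega
end

section
/- Vertex-disjoint routing through a 2D grid: let d ≥ 2 and let G be the d × d grid graph. For every n with 1 ≤ n ≤ d, every set S of n vertices in the top row (second coordinate 0) and every set T of n vertices in the bottom row (second coordinate d−1), there exist n pairwise vertex-disjoint paths in G, each joining a vertex of S to a vertex of T, such that every vertex of S and every vertex of T is an endpoint of exactly one of the paths. -/
open SimpleGraph Walk

section LineWalk
variable {V : Type*} {G : SimpleGraph V}

def lineWalk (f : ℕ → V) (p : ℕ) :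
    (n : ℕ) → (∀ i < n, G.Adj (f (p + i)) (f (p + i + 1))) → G.Walk (f p) (f (p + n))
  | 0, _ => Walk.nil
  | n+1, h => (lineWalk f p n (fun i hi => h i (by omega))).concat (h n (by omega))

lemma lineWalk_support (f : ℕ → V) (p n : ℕ) (h : ∀ i < n, G.Adj (f (p + i)) (f (p + i + 1))) :
    (lineWalk f p n h).support = (List.range (n+1)).map (fun i => f (p + i)) := by
  induction n with
  | zero => simp [lineWalk, List.range_succ]
  | succ n ih =>
      rw [lineWalk, Walk.support_concat, ih (fun i hi => h i (by omega)),
        List.range_succ (n := n+1)]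
      simp

lemma mem_lineWalk_support {f : ℕ → V} {p n : ℕ}
    {h : ∀ i < n, G.Adj (f (p + i)) (f (p + i + 1))} {v : V}
    (hv : v ∈ (lineWalk f p n h).support) : ∃ i ≤ n, v = f (p + i) := by
  rw [lineWalk_support] at hv
  simp only [List.mem_map, List.mem_range] at hv
  obtain ⟨i, hi, rfl⟩ := hv
  exact ⟨i, by omega, rfl⟩

lemma lineWalk_isPath {f : ℕ → V} {p n : ℕ}
    {h : ∀ i < n, G.Adj (f (p + i)) (f (p + i + 1))}
    (hinj : ∀ i ≤ n, ∀ j ≤ n, f (p + i) = f (p + j) → i = j) :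
    (lineWalk f p n h).IsPath := by
  rw [Walk.isPath_def, lineWalk_support]
  refine List.Nodup.map_on ?_ List.nodup_range
  intro i hi j hj hf
  simp only [List.mem_range] at hi hj
  exact hinj i (by omega) j (by omega) hf

lemma append_isPath {u v w : V} {p : G.Walk u v} {q : G.Walk v w}
    (hp : p.IsPath) (hq : q.IsPath) (hj : ∀ x, x ∈ p.support → x ∈ q.support → x = v) :
    (p.append q).IsPath := by
  rw [Walk.isPath_def, Walk.support_append]
  refine List.Nodup.append (Walk.isPath_def _ |>.mp hp) ((Walk.isPath_def _ |>.mp hq).tail) ?_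
  intro x hx hx'
  have hxq : x ∈ q.support := List.mem_of_mem_tail hx'
  have := hj x hx hxq
  subst this
  have := (Walk.isPath_def _ |>.mp hq)
  rw [Walk.support_eq_cons] at this
  exact (List.nodup_cons.mp this).1 hx'

end LineWalk

section GridPath

variable {d : ℕ}

/-- clamped coordinate -/
def cc (hd : 0 < d) (x : ℕ) : Fin d := ⟨min x (d-1), by omega⟩

lemma cc_val (hd : 0 < d) {x : ℕ} (hx : x ≤ d - 1) : ((cc hd x : Fin d) : ℕ) = x := by
  simp [cc]; omega

lemma adjV (hd : 0 < d) {x r : ℕ} (hr : r + 1 ≤ d - 1) :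
    (Grid2 d d).Adj (cc hd x, cc hd r) (cc hd x, cc hd (r+1)) := by
  refine Or.inr ⟨rfl, ?_⟩
  have h1 := cc_val hd (x := r) (by omega)
  have h2 := cc_val hd (x := r+1) hr
  dsimp only
  omega

lemma adjH (hd : 0 < d) {x r : ℕ} (hr : x + 1 ≤ d - 1) :
    (Grid2 d d).Adj (cc hd x, cc hd r) (cc hd (x+1), cc hd r) := by
  refine Or.inl ⟨?_, rfl⟩
  have h1 := cc_val hd (x := x) (by omega)
  have h2 := cc_val hd (x := x+1) hr
  dsimp only
  omega

end GridPath

section GridPath2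
variable {d : ℕ}

def vWalk1 (hd : 0 < d) (α k : ℕ) (hk : k ≤ d - 1) :
    (Grid2 d d).Walk (cc hd α, cc hd 0) (cc hd α, cc hd k) :=
  (lineWalk (fun r => (cc hd α, cc hd r)) 0 k
    (fun i hi => adjV hd (by omega))).copy rfl (congrArg (fun m => (cc hd α, cc hd m)) (Nat.zero_add k))

def hWalk (hd : 0 < d) (α β k : ℕ) (hα : α ≤ d - 1) (hβ : β ≤ d - 1) :
    (Grid2 d d).Walk (cc hd α, cc hd k) (cc hd β, cc hd k) :=
  if h : α ≤ β then
    (lineWalk (fun x => (cc hd x, cc hd k)) α (β - α)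
      (fun i hi => adjH hd (by omega))).copy rfl
        (congrArg (fun m => (cc hd m, cc hd k)) (by omega : α + (β - α) = β))
  else
    ((lineWalk (fun x => (cc hd x, cc hd k)) β (α - β)
      (fun i hi => adjH hd (by omega))).copy rfl
        (congrArg (fun m => (cc hd m, cc hd k)) (by omega : β + (α - β) = α))).reverse

def vWalk2 (hd : 0 < d) (β k : ℕ) (hk : k ≤ d - 1) :
    (Grid2 d d).Walk (cc hd β, cc hd k) (cc hd β, cc hd (d-1)) :=
  (lineWalk (fun r => (cc hd β, cc hd r)) k (d - 1 - k)
    (fun i hi => adjV hd (by omega))).copy rfl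
      (congrArg (fun m => (cc hd β, cc hd m)) (by omega : k + (d - 1 - k) = d - 1))

def gridPath (hd : 0 < d) (α β k : ℕ) (hα : α ≤ d - 1) (hβ : β ≤ d - 1) (hk : k ≤ d - 1) :
    (Grid2 d d).Walk (cc hd α, cc hd 0) (cc hd β, cc hd (d-1)) :=
  ((vWalk1 hd α k hk).append (hWalk hd α β k hα hβ)).append (vWalk2 hd β k hk)

lemma mem_vWalk1 {hd : 0 < d} {α k : ℕ} {hk : k ≤ d - 1} (hα : α ≤ d - 1)
    {v : Fin d × Fin d} (hv : v ∈ (vWalk1 hd α k hk).support) :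
    (v.1 : ℕ) = α ∧ (v.2 : ℕ) ≤ k := by
  rw [vWalk1, Walk.support_copy] at hv
  obtain ⟨i, hi, rfl⟩ := mem_lineWalk_support hv
  constructor
  · exact cc_val hd hα
  · rw [cc_val hd (by omega)]; omega

lemma mem_hWalk {hd : 0 < d} {α β k : ℕ} {hα : α ≤ d - 1} {hβ : β ≤ d - 1} (hk : k ≤ d - 1)
    {v : Fin d × Fin d} (hv : v ∈ (hWalk hd α β k hα hβ).support) :
    (v.2 : ℕ) = k ∧ min α β ≤ (v.1 : ℕ) ∧ (v.1 : ℕ) ≤ max α β := by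
  rw [hWalk] at hv
  split_ifs at hv with h
  · rw [Walk.support_copy] at hv
    obtain ⟨i, hi, rfl⟩ := mem_lineWalk_support hv
    refine ⟨cc_val hd hk, ?_, ?_⟩ <;> rw [cc_val hd (by omega)] <;> omega
  · rw [Walk.support_reverse, List.mem_reverse, Walk.support_copy] at hv
    obtain ⟨i, hi, rfl⟩ := mem_lineWalk_support hv
    refine ⟨cc_val hd hk, ?_, ?_⟩ <;> rw [cc_val hd (by omega)] <;> omega

lemma mem_vWalk2 {hd : 0 < d} {β k : ℕ} {hk : k ≤ d - 1} (hβ : β ≤ d - 1)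
    {v : Fin d × Fin d} (hv : v ∈ (vWalk2 hd β k hk).support) :
    (v.1 : ℕ) = β ∧ k ≤ (v.2 : ℕ) := by
  rw [vWalk2, Walk.support_copy] at hv
  obtain ⟨i, hi, rfl⟩ := mem_lineWalk_support hv
  constructor
  · exact cc_val hd hβ
  · rw [cc_val hd (by omega)]; omega

lemma mem_gridPath {hd : 0 < d} {α β k : ℕ} {hα : α ≤ d - 1} {hβ : β ≤ d - 1} {hk : k ≤ d - 1}
    {v : Fin d × Fin d} (hv : v ∈ (gridPath hd α β k hα hβ hk).support) :
    ((v.1 : ℕ) = α ∧ (v.2 : ℕ) ≤ k) ∨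
    ((v.2 : ℕ) = k ∧ min α β ≤ (v.1 : ℕ) ∧ (v.1 : ℕ) ≤ max α β) ∨
    ((v.1 : ℕ) = β ∧ k ≤ (v.2 : ℕ)) := by
  rw [gridPath, Walk.mem_support_append_iff, Walk.mem_support_append_iff] at hv
  rcases hv with (hv | hv) | hv
  · exact Or.inl (mem_vWalk1 hα hv)
  · exact Or.inr (Or.inl (mem_hWalk hk hv))
  · exact Or.inr (Or.inr (mem_vWalk2 hβ hv))

lemma eq_cc {hd : 0 < d} {x y : ℕ} (hx : x ≤ d - 1) (hy : y ≤ d - 1)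
    {v : Fin d × Fin d} (h1 : (v.1 : ℕ) = x) (h2 : (v.2 : ℕ) = y) :
    v = (cc hd x, cc hd y) := by
  refine Prod.ext (Fin.ext ?_) (Fin.ext ?_) <;> rw [cc_val hd (by omega)] <;> assumption

lemma gridPath_isPath (hd : 0 < d) (α β k : ℕ) (hα : α ≤ d - 1) (hβ : β ≤ d - 1)
    (hk : k ≤ d - 1) : (gridPath hd α β k hα hβ hk).IsPath := by
  have h1 : (vWalk1 hd α k hk).IsPath := by
    rw [vWalk1, Walk.isPath_copy]
    refine lineWalk_isPath ?_
    intro i hi j hj hf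
    have := congrArg (fun p => ((p.2 : Fin d) : ℕ)) hf
    simp only [cc] at this
    omega
  have h2 : (hWalk hd α β k hα hβ).IsPath := by
    rw [hWalk]
    split_ifs with h
    · rw [Walk.isPath_copy]
      refine lineWalk_isPath ?_
      intro i hi j hj hf
      have := congrArg (fun p => ((p.1 : Fin d) : ℕ)) hf
      simp only [cc] at this
      omega
    · refine Walk.IsPath.reverse ?_
      rw [Walk.isPath_copy]
      refine lineWalk_isPath ?_
      intro i hi j hj hf
      have := congrArg (fun p => ((p.1 : Fin d) : ℕ)) hf
      simp only [cc] at this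
      omega
  have h3 : (vWalk2 hd β k hk).IsPath := by
    rw [vWalk2, Walk.isPath_copy]
    refine lineWalk_isPath ?_
    intro i hi j hj hf
    have := congrArg (fun p => ((p.2 : Fin d) : ℕ)) hf
    simp only [cc] at this
    omega
  refine append_isPath (append_isPath h1 h2 ?_) h3 ?_
  · intro x hx hx'
    obtain ⟨e1, e2⟩ := mem_vWalk1 hα hx
    obtain ⟨e3, _, _⟩ := mem_hWalk hk hx'
    exact eq_cc hα hk e1 e3
  · intro x hx hx'
    obtain ⟨e1, e2⟩ := mem_vWalk2 hβ hx'
    rw [Walk.mem_support_append_iff] at hx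
    rcases hx with hx | hx
    · obtain ⟨e3, e4⟩ := mem_vWalk1 hα hx
      exact eq_cc hβ hk e1 (by omega)
    · obtain ⟨e3, _, _⟩ := mem_hWalk hk hx
      exact eq_cc hβ hk e1 e3

lemma pair_disj {α1 β1 k1 α2 β2 k2 x y : ℕ}
    (ha : α1 < α2) (hb : β1 < β2) (hk : k1 ≠ k2)
    (hc1 : k1 < k2 → β1 < α2) (hc2 : k2 < k1 → α1 < β2)
    (m1 : (x = α1 ∧ y ≤ k1) ∨ (y = k1 ∧ min α1 β1 ≤ x ∧ x ≤ max α1 β1) ∨ (x = β1 ∧ k1 ≤ y))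
    (m2 : (x = α2 ∧ y ≤ k2) ∨ (y = k2 ∧ min α2 β2 ≤ x ∧ x ≤ max α2 β2) ∨ (x = β2 ∧ k2 ≤ y)) :
    False := by omega

end GridPath2


section KFun
open scoped Classical

variable (a b : ℕ → ℕ) (n : ℕ)

private lemma sFun_ex (i : ℕ) : ∃ m, m ≤ i ∧ ∀ t, m ≤ t → t < i → a (t+1) ≤ b t :=
  ⟨i, le_rfl, fun t h1 h2 => absurd (lt_of_le_of_lt h1 h2) (lt_irrefl _)⟩

noncomputable def sFun (i : ℕ) : ℕ := Nat.find (sFun_ex a b i)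

noncomputable def eFun (i : ℕ) : ℕ :=
  Nat.findGreatest (fun m => i ≤ m ∧ ∀ t, i ≤ t → t < m → a (t+1) ≤ b t) (n-1)

noncomputable def kFun (i : ℕ) : ℕ := sFun a b i + (eFun a b n i - i)

lemma sFun_le (i : ℕ) : sFun a b i ≤ i := (Nat.find_spec (sFun_ex a b i)).1

lemma sFun_spec (i : ℕ) : ∀ t, sFun a b i ≤ t → t < i → a (t+1) ≤ b t :=
  (Nat.find_spec (sFun_ex a b i)).2

lemma sFun_min {i m : ℕ} (h1 : m ≤ i) (h2 : ∀ t, m ≤ t → t < i → a (t+1) ≤ b t) :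
    sFun a b i ≤ m := Nat.find_min' (sFun_ex a b i) ⟨h1, h2⟩

lemma le_eFun {i : ℕ} (hi : i ≤ n - 1) : i ≤ eFun a b n i :=
  Nat.le_findGreatest hi
    ⟨le_rfl, fun t h1 h2 => absurd (lt_of_le_of_lt h1 h2) (lt_irrefl _)⟩

lemma eFun_le (i : ℕ) : eFun a b n i ≤ n - 1 := Nat.findGreatest_le _

lemma eFun_spec {i : ℕ} (hi : i ≤ n - 1) :
    ∀ t, i ≤ t → t < eFun a b n i → a (t+1) ≤ b t :=
  (Nat.findGreatest_spec (P := fun m => i ≤ m ∧ ∀ t, i ≤ t → t < m → a (t+1) ≤ b t)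
    (m := i) hi
    ⟨le_rfl, fun t h1 h2 => absurd (lt_of_le_of_lt h1 h2) (lt_irrefl _)⟩).2

lemma eFun_max {i m : ℕ} (hm : m ≤ n - 1) (h1 : i ≤ m)
    (h2 : ∀ t, i ≤ t → t < m → a (t+1) ≤ b t) : m ≤ eFun a b n i :=
  Nat.le_findGreatest hm ⟨h1, h2⟩

lemma kFun_le {i : ℕ} (hi : i ≤ n - 1) : kFun a b n i ≤ n - 1 := by
  have h1 := sFun_le a b i
  have h2 := le_eFun a b n hi
  have h3 := eFun_le a b n i
  unfold kFun
  omega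

lemma kFun_pair (hab : ∀ t u, t < u → u < n → a t < a u ∧ b t < b u)
    (i j : ℕ) (hij : i < j) (hj : j < n) :
    (kFun a b n j < kFun a b n i ∧ a i < b j) ∨
    (kFun a b n i < kFun a b n j ∧ b i < a j) := by
  have hi' : i ≤ n - 1 := by omega
  have hj' : j ≤ n - 1 := by omega
  by_cases hcon : ∀ t, i ≤ t → t < j → a (t+1) ≤ b t
  · left
    have hsji : sFun a b j ≤ sFun a b i := by
      refine sFun_min a b ((sFun_le a b i).trans hij.le) ?_
      intro t h1 h2
      rcases lt_or_ge t i with h | h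
      · exact sFun_spec a b i t h1 h
      · exact hcon t h h2
    have hsij : sFun a b i ≤ sFun a b j := by
      refine sFun_min a b (hsji.trans (sFun_le a b i)) ?_
      intro t h1 h2
      exact sFun_spec a b j t h1 (h2.trans hij)
    have heji : eFun a b n j ≤ eFun a b n i := by
      refine eFun_max a b n (eFun_le a b n j) (hij.le.trans (le_eFun a b n hj')) ?_
      intro t h1 h2
      rcases lt_or_ge t j with h | h
      · exact hcon t h1 h
      · exact eFun_spec a b n hj' t h h2
    have heij : eFun a b n i ≤ eFun a b n j := by
      refine eFun_max a b n (eFun_le a b n i) ((le_eFun a b n hj').trans heji) ?_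
      intro t h1 h2
      exact eFun_spec a b n hi' t (by omega) h2
    constructor
    · have h2 := le_eFun a b n hj'
      unfold kFun
      omega
    · have e1 : a (i+1) ≤ b i := hcon i le_rfl hij
      have e2 : a i < a (i+1) := (hab i (i+1) (by omega) (by omega)).1
      have e3 : b i < b j := (hab i j hij hj).2
      omega
  · right
    push_neg at hcon
    obtain ⟨t, h1, h2, h3⟩ := hcon
    have hbi : b i ≤ b t := by
      rcases eq_or_lt_of_le h1 with h | h
      · subst h; exact le_rfl
      · exact (hab i t h (by omega)).2.le
    have haj : a (t+1) ≤ a j := by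
      rcases eq_or_lt_of_le (Nat.succ_le_of_lt h2 : t + 1 ≤ j) with h | h
      · subst h; exact le_rfl
      · exact (hab (t+1) j h hj).1.le
    have hbaj : b i < a j := by omega
    refine ⟨?_, hbaj⟩
    have hei : eFun a b n i ≤ t := by
      by_contra h
      exact absurd (eFun_spec a b n hi' t h1 (by omega)) (by omega)
    have hsj : t + 1 ≤ sFun a b j := by
      by_contra h
      exact absurd (sFun_spec a b j t (by omega) h2) (by omega)
    have k1 : kFun a b n i ≤ eFun a b n i := by
      have := sFun_le a b i
      have := le_eFun a b n hi'
      unfold kFun; omega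
    have k2 : sFun a b j ≤ kFun a b n j := by
      unfold kFun; omega
    omega

end KFun

/-- Vertex-disjoint routing through a 2D grid: `n ≤ d` robots in the top row
of the `d × d` grid can be connected to any `n` target vertices in the bottom
row by pairwise vertex-disjoint paths. -/
theorem grid2_vertex_disjoint_routing (d : ℕ) (hd : 2 ≤ d) (n : ℕ)
    (hn1 : 1 ≤ n) (hnd : n ≤ d) (S T : Finset (Fin d × Fin d))
    (hScard : S.card = n) (hTcard : T.card = n)
    (hStop : ∀ v ∈ S, (v.2 : ℕ) = 0) (hTbot : ∀ v ∈ T, (v.2 : ℕ) = d - 1) :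
    ∃ σ : S → T, Function.Bijective σ ∧
      ∃ w : (s : S) → (Grid2 d d).Walk s.1 (σ s).1,
        (∀ s, (w s).IsPath) ∧
        (∀ s s' : S, s ≠ s' → ∀ v, v ∈ (w s).support → v ∉ (w s').support) := by
  have hd0 : 0 < d := by omega
  -- the column sets
  set S' : Finset (Fin d) := S.image Prod.fst with hS'
  set T' : Finset (Fin d) := T.image Prod.fst with hT'
  have hS'card : S'.card = n := by
    rw [hS', Finset.card_image_of_injOn, hScard]
    intro v hv w hw hvw
    exact Prod.ext hvw (Fin.ext (by rw [hStop v hv, hStop w hw]))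
  have hT'card : T'.card = n := by
    rw [hT', Finset.card_image_of_injOn, hTcard]
    intro v hv w hw hvw
    exact Prod.ext hvw (Fin.ext (by rw [hTbot v hv, hTbot w hw]))
  set oS := S'.orderIsoOfFin hS'card with hoS
  set oT := T'.orderIsoOfFin hT'card with hoT
  -- members of S are exactly (x, 0) for x ∈ S'
  have hSmem : ∀ x ∈ S', ((x, (⟨0, by omega⟩ : Fin d)) : Fin d × Fin d) ∈ S := by
    intro x hx
    obtain ⟨v, hv, rfl⟩ := Finset.mem_image.mp hx
    have h2 : v.2 = (⟨0, by omega⟩ : Fin d) := Fin.ext (hStop v hv)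
    rw [← h2]
    exact hv
  have hTmem : ∀ x ∈ T', ((x, (⟨d-1, by omega⟩ : Fin d)) : Fin d × Fin d) ∈ T := by
    intro x hx
    obtain ⟨v, hv, rfl⟩ := Finset.mem_image.mp hx
    have h2 : v.2 = (⟨d-1, by omega⟩ : Fin d) := Fin.ext (hTbot v hv)
    rw [← h2]
    exact hv
  -- index maps
  have hmemS : ∀ s : S, (s : Fin d × Fin d).1 ∈ S' :=
    fun s => Finset.mem_image_of_mem Prod.fst s.2
  have hmemT : ∀ t : T, (t : Fin d × Fin d).1 ∈ T' :=
    fun t => Finset.mem_image_of_mem Prod.fst t.2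
  set iS : S → Fin n := fun s => oS.symm ⟨(s : Fin d × Fin d).1, hmemS s⟩ with hiS
  set iT : T → Fin n := fun t => oT.symm ⟨(t : Fin d × Fin d).1, hmemT t⟩ with hiT
  have F1 : ∀ s : S, (s : Fin d × Fin d) = (((oS (iS s) : Fin d)), ⟨0, by omega⟩) := by
    intro s
    have h1 : oS (iS s) = ⟨(s : Fin d × Fin d).1, hmemS s⟩ := oS.apply_symm_apply _
    refine Prod.ext ?_ (Fin.ext (hStop _ s.2))
    rw [h1]
  have F1T : ∀ t : T, (t : Fin d × Fin d) = (((oT (iT t) : Fin d)), ⟨d-1, by omega⟩) := by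
    intro t
    have h1 : oT (iT t) = ⟨(t : Fin d × Fin d).1, hmemT t⟩ := oT.apply_symm_apply _
    refine Prod.ext ?_ (Fin.ext (hTbot _ t.2))
    rw [h1]
  have F2 : ∀ (i : Fin n) (h : ((oS i : Fin d), (⟨0, by omega⟩ : Fin d)) ∈ S),
      iS ⟨((oS i : Fin d), ⟨0, by omega⟩), h⟩ = i := by
    intro i h
    exact oS.injective ((oS.apply_symm_apply _).trans (Subtype.ext rfl))
  have F2T : ∀ (i : Fin n) (h : ((oT i : Fin d), (⟨d-1, by omega⟩ : Fin d)) ∈ T),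
      iT ⟨((oT i : Fin d), ⟨d-1, by omega⟩), h⟩ = i := by
    intro i h
    exact oT.injective ((oT.apply_symm_apply _).trans (Subtype.ext rfl))
  -- column functions
  obtain ⟨aF, haF⟩ : ∃ f : ℕ → ℕ, ∀ t (h : t < n), f t = ((oS ⟨t, h⟩ : Fin d) : ℕ) :=
    ⟨fun t => if h : t < n then ((oS ⟨t, h⟩ : Fin d) : ℕ) else 0, fun t h => dif_pos h⟩
  obtain ⟨bF, hbF⟩ : ∃ f : ℕ → ℕ, ∀ t (h : t < n), f t = ((oT ⟨t, h⟩ : Fin d) : ℕ) :=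
    ⟨fun t => if h : t < n then ((oT ⟨t, h⟩ : Fin d) : ℕ) else 0, fun t h => dif_pos h⟩
  have haFle : ∀ (t : ℕ) (h : t < n), aF t ≤ d - 1 := by
    intro t h
    rw [haF t h]
    have := ((oS ⟨t, h⟩ : {x // x ∈ S'}) : Fin d).isLt
    omega
  have hbFle : ∀ (t : ℕ) (h : t < n), bF t ≤ d - 1 := by
    intro t h
    rw [hbF t h]
    have := ((oT ⟨t, h⟩ : {x // x ∈ T'}) : Fin d).isLt
    omega
  have hab : ∀ t u, t < u → u < n → aF t < aF u ∧ bF t < bF u := by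
    intro t u htu hu
    have ht : t < n := htu.trans hu
    rw [haF t ht, haF u hu, hbF t ht, hbF u hu]
    have h1 : (⟨t, ht⟩ : Fin n) < ⟨u, hu⟩ := by simp [Fin.lt_def]; omega
    have h2 := oS.strictMono h1
    have h3 := oT.strictMono h1
    exact ⟨Subtype.coe_lt_coe.mpr h2, Subtype.coe_lt_coe.mpr h3⟩
  have hkle : ∀ t : ℕ, t < n → kFun aF bF n t ≤ d - 1 := by
    intro t ht
    have := kFun_le aF bF n (i := t) (by omega)
    omega
  have hiSinj : ∀ u u' : S, iS u = iS u' → u = u' := by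
    intro u u' h
    have h2 := congrArg (fun i : Fin n => (((oS i : Fin d)), (⟨0, by omega⟩ : Fin d))) h
    exact Subtype.ext ((F1 u).trans (h2.trans (F1 u').symm))
  have E1 : ∀ s : S, ((cc hd0 (aF (iS s)), cc hd0 0) : Fin d × Fin d) = (s : Fin d × Fin d) := by
    intro s
    refine (eq_cc (hd := hd0) (haFle _ (iS s).isLt) (by omega) ?_ ?_).symm
    · rw [haF _ (iS s).isLt]
      conv_rhs => rw [show (⟨(iS s : ℕ), (iS s).isLt⟩ : Fin n) = iS s from Fin.ext rfl]
      rw [F1 s]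
    · exact hStop _ s.2
  have E2 : ∀ s : S, ((cc hd0 (bF (iS s)), cc hd0 (d-1)) : Fin d × Fin d) =
      (((oT (iS s) : Fin d)), (⟨d-1, by omega⟩ : Fin d)) := by
    intro s
    refine (eq_cc (hd := hd0) (v := (((oT (iS s) : Fin d)), ⟨d-1, by omega⟩))
      (hbFle _ (iS s).isLt) (by omega) ?_ rfl).symm
    rw [hbF _ (iS s).isLt]
  refine ⟨fun s => ⟨(((oT (iS s) : Fin d)), ⟨d-1, by omega⟩), hTmem _ (oT (iS s)).2⟩, ?_, ?_⟩
  · refine Function.bijective_iff_has_inverse.mpr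
      ⟨fun t => ⟨(((oS (iT t) : Fin d)), ⟨0, by omega⟩), hSmem _ (oS (iT t)).2⟩, ?_, ?_⟩
    · intro s
      have h := F2T (iS s) (hTmem _ (oT (iS s)).2)
      refine Subtype.ext ?_
      show (((oS (iT _) : Fin d)), (⟨0, by omega⟩ : Fin d)) = (s : Fin d × Fin d)
      rw [h]
      exact (F1 s).symm
    · intro t
      have h := F2 (iT t) (hSmem _ (oS (iT t)).2)
      refine Subtype.ext ?_
      show (((oT (iS _) : Fin d)), (⟨d-1, by omega⟩ : Fin d)) = (t : Fin d × Fin d)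
      rw [h]
      exact (F1T t).symm
  · refine ⟨fun s => ((gridPath hd0 (aF (iS s)) (bF (iS s)) (kFun aF bF n (iS s))
      (haFle _ (iS s).isLt) (hbFle _ (iS s).isLt) (hkle _ (iS s).isLt)).copy
      (E1 s) (E2 s)), ?_, ?_⟩
    · intro s
      rw [Walk.isPath_copy]
      exact gridPath_isPath hd0 _ _ _ _ _ _
    · intro s s' hss v hv hv'
      rw [Walk.support_copy] at hv hv'
      have m1 := mem_gridPath hv
      have m2 := mem_gridPath hv'
      have hij : iS s ≠ iS s' := fun h => hss (hiSinj s s' h)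
      rcases lt_trichotomy ((iS s : ℕ)) ((iS s' : ℕ)) with hlt | heq | hgt
      · rcases kFun_pair aF bF n hab (iS s) (iS s') hlt (iS s').isLt with ⟨h1, h2⟩ | ⟨h1, h2⟩
        · exact pair_disj (hab _ _ hlt (iS s').isLt).1 (hab _ _ hlt (iS s').isLt).2
            (by omega) (fun h => by omega) (fun h => by omega) m1 m2
        · exact pair_disj (hab _ _ hlt (iS s').isLt).1 (hab _ _ hlt (iS s').isLt).2
            (by omega) (fun h => by omega) (fun h => by omega) m1 m2
      · exact hij (Fin.ext heq)
      · rcases kFun_pair aF bF n hab (iS s') (iS s) hgt (iS s).isLt with ⟨h1, h2⟩ | ⟨h1, h2⟩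
        · exact pair_disj (hab _ _ hgt (iS s).isLt).1 (hab _ _ hgt (iS s).isLt).2
            (by omega) (fun h => by omega) (fun h => by omega) m2 m1
        · exact pair_disj (hab _ _ hgt (iS s).isLt).1 (hab _ _ hgt (iS s).isLt).2
            (by omega) (fun h => by omega) (fun h => by omega) m2 m1
end

section
/- Boundary-crossing bounds for the cell partition: let d ≥ 1 and q_1, q_2 ≥ 1 be integers, let G be the 5q_1d × 5q_2d grid graph, and partition its vertices into 5d × 5d cells by cell(x,y) = (⌊x/(5d)⌋, ⌊y/(5d)⌋). Let p = (G, X_I, X_G) be an MPP instance with d_g(p) ≤ d. Then: (i) for every robot i, cell(X_I(i)) and cell(X_G(i)) are equal or adjacent as cells (each coordinate of the two cell indices differs by at most 1); (ii) for any two cells c ≠ c' that are orthogonally adjacent (cell indices differing by 1 in exactly one coordinate), the number of robots i with cell(X_I(i)) = c and cell(X_G(i)) = c' is at most 5d²; (iii) for any two diagonally adjacent cells c, c' (cell indices differing by 1 in both coordinates), the number of robots i with cell(X_I(i)) = c and cell(X_G(i)) = c' is at most d². -/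
/-- The `5d × 5d` cell containing a vertex of the grid. -/
def cell5 (d : ℕ) {m₁ m₂ : ℕ} (v : Fin m₁ × Fin m₂) : ℕ × ℕ :=
  ((v.1 : ℕ) / (5 * d), (v.2 : ℕ) / (5 * d))

/-- Two cell indices are orthogonally adjacent: they differ by 1 in exactly
one coordinate. -/
def OrthAdjCell (c c' : ℕ × ℕ) : Prop :=
  (c.1 = c'.1 ∧ ((c.2 : ℤ) - (c'.2 : ℤ)).natAbs = 1) ∨
  (((c.1 : ℤ) - (c'.1 : ℤ)).natAbs = 1 ∧ c.2 = c'.2)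

/-- Two cell indices are diagonally adjacent: they differ by 1 in both
coordinates. -/
def DiagAdjCell (c c' : ℕ × ℕ) : Prop :=
  ((c.1 : ℤ) - (c'.1 : ℤ)).natAbs = 1 ∧ ((c.2 : ℤ) - (c'.2 : ℤ)).natAbs = 1

section Helpers

private lemma grid_reach_zero {m₁ m₂ : ℕ} (h₁ : 0 < m₁) (h₂ : 0 < m₂) :
    ∀ (n : ℕ) (v : Fin m₁ × Fin m₂), (v.1 : ℕ) + (v.2 : ℕ) = n →
      (Grid2 m₁ m₂).Reachable v (⟨0, h₁⟩, ⟨0, h₂⟩) := by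
  intro n
  induction n with
  | zero =>
    intro v hv
    have : v = (⟨0, h₁⟩, ⟨0, h₂⟩) := by
      apply Prod.ext <;> apply Fin.ext <;> simp <;> omega
    rw [this]
  | succ n ih =>
    intro v hv
    rcases Nat.eq_zero_or_pos (v.1 : ℕ) with h | h
    · -- step down in second coordinate
      have hpos : 0 < (v.2 : ℕ) := by omega
      set w : Fin m₁ × Fin m₂ := (v.1, ⟨(v.2 : ℕ) - 1, by omega⟩) with hw
      have hadj : (Grid2 m₁ m₂).Adj v w := by
        refine Or.inr ⟨rfl, ?_⟩
        simp only [hw]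
        push_cast [Nat.cast_sub hpos]
        omega
      exact (hadj.reachable).trans (ih w (by simp [hw]; omega))
    · set w : Fin m₁ × Fin m₂ := (⟨(v.1 : ℕ) - 1, by omega⟩, v.2) with hw
      have hadj : (Grid2 m₁ m₂).Adj v w := by
        refine Or.inl ⟨?_, rfl⟩
        simp only [hw]
        push_cast [Nat.cast_sub h]
        omega
      exact (hadj.reachable).trans (ih w (by simp [hw]; omega))

private lemma walk_l1 {m₁ m₂ : ℕ} {a b : Fin m₁ × Fin m₂}
    (w : (Grid2 m₁ m₂).Walk a b) :
    (((a.1 : ℕ) : ℤ) - ((b.1 : ℕ) : ℤ)).natAbs + (((a.2 : ℕ) : ℤ) - ((b.2 : ℕ) : ℤ)).natAbs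
      ≤ w.length := by
  induction w with
  | nil => simp
  | @cons u v c h p ih =>
    rw [SimpleGraph.Walk.length_cons]
    rcases h with ⟨h1, h2⟩ | ⟨h1, h2⟩
    · have h2' : ((u.2 : ℕ) : ℤ) = ((v.2 : ℕ) : ℤ) := by exact_mod_cast congrArg Fin.val h2
      omega
    · have h1' : ((u.1 : ℕ) : ℤ) = ((v.1 : ℕ) : ℤ) := by exact_mod_cast congrArg Fin.val h1
      omega

private lemma band (d b y : ℕ) (hd : 1 ≤ d) (hy : y / (5 * d) = b) :
    5 * d * b ≤ y ∧ y < 5 * d * b + 5 * d := by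
  have h5 : 0 < 5 * d := by omega
  have hdm := Nat.div_add_mod y (5 * d)
  have hmod := Nat.mod_lt y h5
  rw [hy] at hdm
  obtain ⟨M, hM⟩ : ∃ M, 5 * d * b = M := ⟨_, rfl⟩
  rw [hM] at hdm ⊢
  omega

/-- Start of the width-`d` strip inside cell band `b` next to cell band `b'`. -/
private def stripStart (d b b' : ℕ) : ℕ := if b < b' then 5 * d * b' - d else 5 * d * b

private lemma strip (d b b' y z : ℕ) (hd : 1 ≤ d) (hy : y / (5 * d) = b)
    (hz : z / (5 * d) = b') (hadj : ((b : ℤ) - (b' : ℤ)).natAbs = 1)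
    (hdist : ((y : ℤ) - (z : ℤ)).natAbs ≤ d) :
    stripStart d b b' ≤ y ∧ y < stripStart d b b' + d := by
  have hby := band d b y hd hy
  have hbz := band d b' z hd hz
  unfold stripStart
  rcases Nat.lt_or_ge b b' with h | h
  · have hb' : b' = b + 1 := by omega
    rw [if_pos h]
    subst hb'
    have hmul : 5 * d * (b + 1) = 5 * d * b + 5 * d := by ring
    obtain ⟨M, hM⟩ : ∃ M, 5 * d * b = M := ⟨_, rfl⟩
    rw [hM] at hby
    rw [hmul, hM] at hbz ⊢
    omega
  · have hb : b = b' + 1 := by omega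
    rw [if_neg (by omega)]
    subst hb
    have hmul : 5 * d * (b' + 1) = 5 * d * b' + 5 * d := by ring
    obtain ⟨M, hM⟩ : ∃ M, 5 * d * b' = M := ⟨_, rfl⟩
    rw [hM] at hbz
    rw [hmul, hM] at hby ⊢
    omega

private lemma celldiff (d y z : ℕ) (hd : 1 ≤ d) (h : ((y : ℤ) - (z : ℤ)).natAbs ≤ d) :
    (((y / (5 * d) : ℕ) : ℤ) - ((z / (5 * d) : ℕ) : ℤ)).natAbs ≤ 1 := by
  have h5 : 0 < 5 * d := by omega
  have h1 : y / (5 * d) ≤ z / (5 * d) + 1 := by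
    calc y / (5 * d) ≤ (z + 5 * d) / (5 * d) := Nat.div_le_div_right (by omega)
      _ = z / (5 * d) + 1 := Nat.add_div_right z h5
  have h2 : z / (5 * d) ≤ y / (5 * d) + 1 := by
    calc z / (5 * d) ≤ (y + 5 * d) / (5 * d) := Nat.div_le_div_right (by omega)
      _ = y / (5 * d) + 1 := Nat.add_div_right y h5
  omega

private lemma card_le_box {m₁ m₂ : ℕ} (XI XG : Equiv.Perm (Fin m₁ × Fin m₂)) (d : ℕ)
    (c c' : ℕ × ℕ) (a₁ k₁ a₂ k₂ : ℕ)
    (h : ∀ i, cell5 d (XI i) = c → cell5 d (XG i) = c' →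
      (a₁ ≤ ((XI i).1 : ℕ) ∧ ((XI i).1 : ℕ) < a₁ + k₁) ∧
      (a₂ ≤ ((XI i).2 : ℕ) ∧ ((XI i).2 : ℕ) < a₂ + k₂)) :
    (Finset.univ.filter fun i => cell5 d (XI i) = c ∧ cell5 d (XG i) = c').card
      ≤ k₁ * k₂ := by
  have hcard : (Finset.univ.filter fun i => cell5 d (XI i) = c ∧ cell5 d (XG i) = c').card
      ≤ ((Finset.Ico a₁ (a₁ + k₁)) ×ˢ (Finset.Ico a₂ (a₂ + k₂))).card := by
    apply Finset.card_le_card_of_injOn (fun i => (((XI i).1 : ℕ), ((XI i).2 : ℕ)))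
    · intro i hi
      rw [Finset.mem_coe, Finset.mem_filter] at hi
      obtain ⟨-, h1, h2⟩ := hi
      obtain ⟨⟨ha, hb⟩, hc, hd⟩ := h i h1 h2
      simp [Finset.mem_product, Finset.mem_Ico, ha, hb, hc, hd]
    · intro i _ j _ hij
      have h1 : (XI i).1 = (XI j).1 := Fin.ext (congrArg Prod.fst hij)
      have h2 : (XI i).2 = (XI j).2 := Fin.ext (congrArg Prod.snd hij)
      exact XI.injective (Prod.ext h1 h2)
  calc _ ≤ _ := hcard
    _ = k₁ * k₂ := by simp [Nat.card_Ico]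

end Helpers

/-- Boundary-crossing bounds for the `5d × 5d` cell partition of a
`5q₁d × 5q₂d` grid, for an instance of distance gap at most `d`:
(i) each robot's initial and goal cells agree or are (diagonally) adjacent;
(ii) at most `5d²` robots cross between two orthogonally adjacent cells;
(iii) at most `d²` robots cross between two diagonally adjacent cells. -/
theorem cell_partition_boundary_crossing_bounds
    (d q₁ q₂ : ℕ) (hd : 1 ≤ d) (hq₁ : 1 ≤ q₁) (hq₂ : 1 ≤ q₂)
    (XI XG : Equiv.Perm (Fin (5 * q₁ * d) × Fin (5 * q₂ * d)))
    (hgap : ∀ v, (Grid2 (5 * q₁ * d) (5 * q₂ * d)).dist (XI v) (XG v) ≤ d) :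
    (∀ i, (((cell5 d (XI i)).1 : ℤ) - ((cell5 d (XG i)).1 : ℤ)).natAbs ≤ 1 ∧
          (((cell5 d (XI i)).2 : ℤ) - ((cell5 d (XG i)).2 : ℤ)).natAbs ≤ 1) ∧
    (∀ c c' : ℕ × ℕ, OrthAdjCell c c' →
      (Finset.univ.filter fun i => cell5 d (XI i) = c ∧ cell5 d (XG i) = c').card
        ≤ 5 * d ^ 2) ∧
    (∀ c c' : ℕ × ℕ, DiagAdjCell c c' →
      (Finset.univ.filter fun i => cell5 d (XI i) = c ∧ cell5 d (XG i) = c').card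
        ≤ d ^ 2) := by
  have hm₁ : 0 < 5 * q₁ * d := Nat.mul_pos (Nat.mul_pos (by norm_num) hq₁) hd
  have hm₂ : 0 < 5 * q₂ * d := Nat.mul_pos (Nat.mul_pos (by norm_num) hq₂) hd
  have hL1 : ∀ i, (((XI i).1 : ℤ) - ((XG i).1 : ℤ)).natAbs +
      (((XI i).2 : ℤ) - ((XG i).2 : ℤ)).natAbs ≤ d := by
    intro i
    have hr : (Grid2 (5 * q₁ * d) (5 * q₂ * d)).Reachable (XI i) (XG i) :=
      (grid_reach_zero hm₁ hm₂ _ (XI i) rfl).trans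
        (grid_reach_zero hm₁ hm₂ _ (XG i) rfl).symm
    obtain ⟨w, hw⟩ := hr.exists_walk_length_eq_dist
    calc _ ≤ w.length := walk_l1 w
      _ = _ := hw
      _ ≤ d := hgap i
  refine ⟨?_, ?_, ?_⟩
  · intro i
    have h := hL1 i
    constructor
    · exact celldiff d _ _ hd (by omega)
    · exact celldiff d _ _ hd (by omega)
  · intro c c' hadj
    rcases hadj with ⟨h1, h2⟩ | ⟨h1, h2⟩
    · have hbox := card_le_box XI XG d c c' (5 * d * c.1) (5 * d)
        (stripStart d c.2 c'.2) d (by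
          intro i hcI hcG
          have e1 : ((XI i).1 : ℕ) / (5 * d) = c.1 := congrArg Prod.fst hcI
          have e2 : ((XI i).2 : ℕ) / (5 * d) = c.2 := congrArg Prod.snd hcI
          have e3 : ((XG i).2 : ℕ) / (5 * d) = c'.2 := congrArg Prod.snd hcG
          have hb := band d c.1 _ hd e1
          have hs := strip d c.2 c'.2 _ _ hd e2 e3 h2 (by have := hL1 i; omega)
          exact ⟨⟨hb.1, hb.2⟩, hs.1, hs.2⟩)
      calc _ ≤ 5 * d * d := hbox
        _ = 5 * d ^ 2 := by ring
    · have hbox := card_le_box XI XG d c c' (stripStart d c.1 c'.1) d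
        (5 * d * c.2) (5 * d) (by
          intro i hcI hcG
          have e1 : ((XI i).1 : ℕ) / (5 * d) = c.1 := congrArg Prod.fst hcI
          have e2 : ((XI i).2 : ℕ) / (5 * d) = c.2 := congrArg Prod.snd hcI
          have e3 : ((XG i).1 : ℕ) / (5 * d) = c'.1 := congrArg Prod.fst hcG
          have hb := band d c.2 _ hd e2
          have hs := strip d c.1 c'.1 _ _ hd e1 e3 h1 (by have := hL1 i; omega)
          exact ⟨⟨hs.1, hs.2⟩, hb.1, hb.2⟩)
      calc _ ≤ d * (5 * d) := hbox
        _ = 5 * d ^ 2 := by ring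
  · intro c c' hadj
    obtain ⟨h1, h2⟩ := hadj
    have hbox := card_le_box XI XG d c c' (stripStart d c.1 c'.1) d
      (stripStart d c.2 c'.2) d (by
        intro i hcI hcG
        have e1 : ((XI i).1 : ℕ) / (5 * d) = c.1 := congrArg Prod.fst hcI
        have e2 : ((XI i).2 : ℕ) / (5 * d) = c.2 := congrArg Prod.snd hcI
        have e3 : ((XG i).1 : ℕ) / (5 * d) = c'.1 := congrArg Prod.fst hcG
        have e4 : ((XG i).2 : ℕ) / (5 * d) = c'.2 := congrArg Prod.snd hcG
        have hs1 := strip d c.1 c'.1 _ _ hd e1 e3 h1 (by have := hL1 i; omega)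
        have hs2 := strip d c.2 c'.2 _ _ hd e2 e4 h2 (by have := hL1 i; omega)
        exact ⟨⟨hs1.1, hs1.2⟩, hs2.1, hs2.2⟩)
    calc _ ≤ d * d := hbox
      _ = d ^ 2 := by ring
end
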